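/- arXiv:2304.03264 — 2 statements merged into one kernel-verified Lean document; each statement's English description precedes it below -/
import Mathlib

section
/- Let 𝓖 be an undirected graph on N vertices with Laplacian 𝓛, 𝓥_l a nonempty set of informed agents with indicator diagonal matrix E, and fix 0 < m_ψ ≤ L_ψ. There exist constants 0 < m ≤ L such that f(y) = ½(y−r)ᵀ(𝓛⊗I_d)(y−r) + Σ_{i∈𝓥_l} ψ(y_i) belongs to S(m,L) for every ψ ∈ S(m_ψ,L_ψ), if and only if every vertex of 𝓖 has a path to some vertex in 𝓥_l. -/
open Matrix
open scoped Kronecker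

def memS {E : Type*} [NormedAddCommGroup E] [InnerProductSpace ℝ E] [CompleteSpace E]
    (m L : ℝ) (f : E → ℝ) : Prop :=
  ContDiff ℝ 1 f ∧
    ∀ y₁ y₂ : E,
      m * ‖y₁ - y₂‖ ^ 2 ≤ (inner ℝ (gradient f y₁ - gradient f y₂) (y₁ - y₂) : ℝ) ∧
      (inner ℝ (gradient f y₁ - gradient f y₂) (y₁ - y₂) : ℝ) ≤ L * ‖y₁ - y₂‖ ^ 2

noncomputable def bigf {N d : ℕ} (𝓛 : Matrix (Fin N) (Fin N) ℝ)
    (r : EuclideanSpace ℝ (Fin N × Fin d)) (Vl : Finset (Fin N))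
    (ψ : EuclideanSpace ℝ (Fin d) → ℝ) (y : EuclideanSpace ℝ (Fin N × Fin d)) : ℝ :=
  (1 / 2) * ((fun p => y p - r p) ⬝ᵥ
      (𝓛 ⊗ₖ (1 : Matrix (Fin d) (Fin d) ℝ)).mulVec (fun p => y p - r p))
    + ∑ i ∈ Vl, ψ (WithLp.toLp 2 (fun j => y (i, j)))

noncomputable def Lop {N d : ℕ} (A : Matrix (Fin N) (Fin N) ℝ) :
    EuclideanSpace ℝ (Fin N × Fin d) →L[ℝ] EuclideanSpace ℝ (Fin N × Fin d) :=
  LinearMap.toContinuousLinearMap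
    (Matrix.toEuclideanLin (A ⊗ₖ (1 : Matrix (Fin d) (Fin d) ℝ)))

lemma Lop_apply {N d : ℕ} (A : Matrix (Fin N) (Fin N) ℝ)
    (v : EuclideanSpace ℝ (Fin N × Fin d)) (p : Fin N × Fin d) :
    Lop A v p = ((A ⊗ₖ (1 : Matrix (Fin d) (Fin d) ℝ)) *ᵥ (fun q => v q)) p := rfl

noncomputable def proj2 {N d : ℕ} (i : Fin N) :
    EuclideanSpace ℝ (Fin N × Fin d) →L[ℝ] EuclideanSpace ℝ (Fin d) :=
  LinearMap.toContinuousLinearMap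
    { toFun := fun y => (WithLp.toLp 2 (fun j => y (i, j)) : EuclideanSpace ℝ (Fin d))
      map_add' := fun _ _ => rfl
      map_smul' := fun _ _ => rfl }

lemma proj2_apply {N d : ℕ} (i : Fin N) (y : EuclideanSpace ℝ (Fin N × Fin d)) (j : Fin d) :
    proj2 i y j = y (i, j) := rfl

lemma inner_grad {E : Type*} [NormedAddCommGroup E] [InnerProductSpace ℝ E] [CompleteSpace E]
    {f : E → ℝ} {y : E} (h : DifferentiableAt ℝ f y) (v : E) :
    (inner ℝ (gradient f y) v : ℝ) = fderiv ℝ f y v := by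
  have := h.hasGradientAt
  have h2 : fderiv ℝ f y = InnerProductSpace.toDual ℝ E (gradient f y) :=
    ((hasGradientAt_iff_hasFDerivAt.mp this).fderiv)
  rw [h2, InnerProductSpace.toDual_apply_apply]

lemma bigf_eq {N d : ℕ} (A : Matrix (Fin N) (Fin N) ℝ)
    (r : EuclideanSpace ℝ (Fin N × Fin d)) (Vl : Finset (Fin N))
    (ψ : EuclideanSpace ℝ (Fin d) → ℝ) :
    bigf A r Vl ψ = fun y =>
      (1 / 2) * (inner ℝ (y - r) (Lop A (y - r)) : ℝ) + ∑ i ∈ Vl, ψ (proj2 i y) := by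
  funext y
  unfold bigf
  rw [real_inner_comm]; rfl

section deriv
variable {N d : ℕ} (A : Matrix (Fin N) (Fin N) ℝ)
    (r : EuclideanSpace ℝ (Fin N × Fin d)) (Vl : Finset (Fin N))
    {ψ : EuclideanSpace ℝ (Fin d) → ℝ}

lemma bigf_contDiff (hψ : ContDiff ℝ 1 ψ) : ContDiff ℝ 1 (bigf A r Vl ψ) := by
  rw [bigf_eq]
  refine ContDiff.add (ContDiff.mul contDiff_const ?_) ?_
  · exact ContDiff.inner ℝ (contDiff_id.sub contDiff_const)
      ((Lop A).contDiff.comp (contDiff_id.sub contDiff_const))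
  · exact ContDiff.sum fun i _ => hψ.comp (proj2 i).contDiff

lemma bigf_hasFDerivAt (hψ : ContDiff ℝ 1 ψ) (y : EuclideanSpace ℝ (Fin N × Fin d)) :
    HasFDerivAt (bigf A r Vl ψ)
      ((1 / 2 : ℝ) • ((fderivInnerCLM ℝ (y - r, Lop A (y - r))).comp
          ((ContinuousLinearMap.id ℝ _).prod
            ((Lop A).comp (ContinuousLinearMap.id ℝ _)))) +
        ∑ i ∈ Vl, (fderiv ℝ ψ (proj2 i y)).comp (proj2 i)) y := by
  rw [bigf_eq]
  have h1 : HasFDerivAt (fun z : EuclideanSpace ℝ (Fin N × Fin d) => z - r)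
      (ContinuousLinearMap.id ℝ _) y := (hasFDerivAt_id y).sub_const r
  have h2 : HasFDerivAt (fun z : EuclideanSpace ℝ (Fin N × Fin d) => Lop A (z - r))
      ((Lop A).comp (ContinuousLinearMap.id ℝ _)) y :=
    ((Lop A).hasFDerivAt).comp y h1
  have hq := (h1.inner ℝ h2).const_mul (1 / 2 : ℝ)
  have hs : HasFDerivAt (fun z : EuclideanSpace ℝ (Fin N × Fin d) => ∑ i ∈ Vl, ψ (proj2 i z))
      (∑ i ∈ Vl, (fderiv ℝ ψ (proj2 i y)).comp (proj2 i)) y := by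
    refine HasFDerivAt.fun_sum fun i _ => ?_
    exact ((hψ.differentiable one_ne_zero (proj2 i y)).hasFDerivAt).comp y ((proj2 i).hasFDerivAt)
  exact hq.add hs

lemma bigf_fderiv_apply (hψ : ContDiff ℝ 1 ψ) (y v : EuclideanSpace ℝ (Fin N × Fin d)) :
    fderiv ℝ (bigf A r Vl ψ) y v =
      (1 / 2 : ℝ) * ((inner ℝ (y - r) (Lop A v) : ℝ) + (inner ℝ v (Lop A (y - r)) : ℝ))
        + ∑ i ∈ Vl, fderiv ℝ ψ (proj2 i y) (proj2 i v) := by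
  rw [(bigf_hasFDerivAt A r Vl hψ y).fderiv]
  simp [fderivInnerCLM_apply, smul_eq_mul]

end deriv

lemma bigf_grad_inner {N d : ℕ} (A : Matrix (Fin N) (Fin N) ℝ)
    (r : EuclideanSpace ℝ (Fin N × Fin d)) (Vl : Finset (Fin N))
    {ψ : EuclideanSpace ℝ (Fin d) → ℝ} (hψ : ContDiff ℝ 1 ψ)
    (y₁ y₂ : EuclideanSpace ℝ (Fin N × Fin d)) :
    (inner ℝ (gradient (bigf A r Vl ψ) y₁ - gradient (bigf A r Vl ψ) y₂) (y₁ - y₂) : ℝ) =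
      (inner ℝ (y₁ - y₂) (Lop A (y₁ - y₂)) : ℝ) +
        ∑ i ∈ Vl, (inner ℝ (gradient ψ (proj2 i y₁) - gradient ψ (proj2 i y₂))
          (proj2 i y₁ - proj2 i y₂) : ℝ) := by
  have hf := bigf_contDiff A r Vl hψ
  have hd : ∀ y, DifferentiableAt ℝ (bigf A r Vl ψ) y :=
    fun y => (hf.differentiable one_ne_zero) y
  have hψd : ∀ x, DifferentiableAt ℝ ψ x := fun x => hψ.differentiable one_ne_zero x
  rw [inner_sub_left, inner_grad (hd y₁), inner_grad (hd y₂),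
    bigf_fderiv_apply A r Vl hψ, bigf_fderiv_apply A r Vl hψ]
  have hterm : ∀ i ∈ Vl,
      fderiv ℝ ψ (proj2 i y₁) (proj2 i (y₁ - y₂)) - fderiv ℝ ψ (proj2 i y₂) (proj2 i (y₁ - y₂))
      = (inner ℝ (gradient ψ (proj2 i y₁) - gradient ψ (proj2 i y₂))
          (proj2 i y₁ - proj2 i y₂) : ℝ) := by
    intro i _
    rw [inner_sub_left, inner_grad (hψd _), inner_grad (hψd _), ← map_sub (proj2 i)]
  have hsum : ∑ i ∈ Vl, fderiv ℝ ψ (proj2 i y₁) (proj2 i (y₁ - y₂))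
      - ∑ i ∈ Vl, fderiv ℝ ψ (proj2 i y₂) (proj2 i (y₁ - y₂))
      = ∑ i ∈ Vl, (inner ℝ (gradient ψ (proj2 i y₁) - gradient ψ (proj2 i y₂))
          (proj2 i y₁ - proj2 i y₂) : ℝ) := by
    rw [← Finset.sum_sub_distrib]; exact Finset.sum_congr rfl hterm
  have h1 : (inner ℝ (y₁ - r) (Lop A (y₁ - y₂)) : ℝ) - (inner ℝ (y₂ - r) (Lop A (y₁ - y₂)) : ℝ)
      = (inner ℝ (y₁ - y₂) (Lop A (y₁ - y₂)) : ℝ) := by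
    rw [← inner_sub_left]; congr 1; abel
  have h2 : (inner ℝ (y₁ - y₂) (Lop A (y₁ - r)) : ℝ) - (inner ℝ (y₁ - y₂) (Lop A (y₂ - r)) : ℝ)
      = (inner ℝ (y₁ - y₂) (Lop A (y₁ - y₂)) : ℝ) := by
    rw [← inner_sub_right, ← map_sub]; congr 2; abel
  linarith [h1, h2, hsum]

lemma inner_Lop {N d : ℕ} (A : Matrix (Fin N) (Fin N) ℝ)
    (x : EuclideanSpace ℝ (Fin N × Fin d)) :
    (inner ℝ x (Lop A x) : ℝ)
      = ∑ j : Fin d, (fun i => x (i, j)) ⬝ᵥ A *ᵥ (fun i => x (i, j)) := by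
  have hker : ∀ p : Fin N × Fin d, Lop A x p = ∑ k, A p.1 k * x (k, p.2) := by
    intro p
    show ((A ⊗ₖ (1 : Matrix (Fin d) (Fin d) ℝ)) *ᵥ (fun q => x q)) p = _
    simp [mulVec, dotProduct, Fintype.sum_prod_type, Matrix.one_apply, mul_ite,
      Finset.mul_sum, mul_comm, mul_left_comm]
  simp only [PiLp.inner_apply, RCLike.inner_apply, conj_trivial, hker, dotProduct, mulVec,
    Fintype.sum_prod_type]
  rw [Finset.sum_comm]
  exact Finset.sum_congr rfl fun j _ => Finset.sum_congr rfl fun i _ => mul_comm _ _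

lemma quad_continuous {N : ℕ} (A : Matrix (Fin N) (Fin N) ℝ) :
    Continuous (fun v : EuclideanSpace ℝ (Fin N) => (fun i => v i) ⬝ᵥ A *ᵥ (fun i => v i)) := by
  simp only [dotProduct, mulVec]
  refine continuous_finset_sum _ fun i _ => Continuous.mul ?_ (continuous_finset_sum _ fun k _ => Continuous.mul continuous_const ?_)
  · exact (continuous_apply i).comp (PiLp.continuous_ofLp 2 _)
  · exact (continuous_apply k).comp (PiLp.continuous_ofLp 2 _)

lemma exists_spectral_min {N : ℕ} [NeZero N] (A : Matrix (Fin N) (Fin N) ℝ)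
    (hA : ∀ v : Fin N → ℝ, v ≠ 0 → 0 < v ⬝ᵥ A *ᵥ v) :
    ∃ m : ℝ, 0 < m ∧ ∀ v : Fin N → ℝ, m * (∑ i, v i ^ 2) ≤ v ⬝ᵥ A *ᵥ v := by
  set φ : EuclideanSpace ℝ (Fin N) → ℝ := fun v => (fun i => v i) ⬝ᵥ A *ᵥ (fun i => v i) with hφ
  have hc : Continuous φ := quad_continuous A
  have hne : (Metric.sphere (0 : EuclideanSpace ℝ (Fin N)) 1).Nonempty := by
    refine ⟨EuclideanSpace.single ⟨0, Nat.pos_of_ne_zero (NeZero.ne N)⟩ (1 : ℝ), ?_⟩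
    simp [EuclideanSpace.norm_single]
  obtain ⟨u, hu, hmin⟩ := (isCompact_sphere (0 : EuclideanSpace ℝ (Fin N)) 1).exists_isMinOn
    hne hc.continuousOn
  have hu1 : ‖u‖ = 1 := by simpa using hu
  have hu0 : (fun i => u i) ≠ 0 := by
    intro h
    have : u = 0 := by
      ext i; exact congrFun h i
    rw [this] at hu1; simp at hu1
  refine ⟨φ u, hA _ hu0, fun v => ?_⟩
  by_cases hv : (fun i => v i) = (0 : Fin N → ℝ)
  · have hvz : ∀ i, v i = 0 := fun i => congrFun hv i
    simp [dotProduct, mulVec, hvz]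
  · set w : EuclideanSpace ℝ (Fin N) := (WithLp.equiv 2 _).symm v with hw
    have hwv : ∀ i, w i = v i := fun i => rfl
    have hwne : w ≠ 0 := by
      intro h; apply hv; funext i; rw [← hwv i, h]; rfl
    have hnw : ‖w‖ ≠ 0 := norm_ne_zero_iff.mpr hwne
    set c : ℝ := ‖w‖ with hc'
    have hcpos : 0 < c := lt_of_le_of_ne (norm_nonneg w) (Ne.symm hnw)
    set u' : EuclideanSpace ℝ (Fin N) := c⁻¹ • w with hu'
    have hu'mem : u' ∈ Metric.sphere (0 : EuclideanSpace ℝ (Fin N)) 1 := by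
      rw [mem_sphere_zero_iff_norm, hu', norm_smul, norm_inv, Real.norm_eq_abs,
        abs_of_pos hcpos, ← hc', inv_mul_cancel₀ hnw]
    have hφu' : φ u ≤ φ u' := hmin hu'mem
    have hscale : φ w = c ^ 2 * φ u' := by
      have : ∀ i, u' i = c⁻¹ * w i := fun i => rfl
      simp only [hφ, dotProduct, mulVec, this, Finset.mul_sum]
      refine Finset.sum_congr rfl fun i _ => ?_
      refine Finset.sum_congr rfl fun k _ => ?_
      field_simp
    have hnormsq : ∑ i, v i ^ 2 = c ^ 2 := by
      rw [hc', EuclideanSpace.norm_eq, Real.sq_sqrt (by positivity)]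
      refine Finset.sum_congr rfl fun i _ => by rw [hwv]; simp [sq_abs]
      
    have : φ u * c ^ 2 ≤ φ w := by
      rw [hscale]
      nlinarith [hφu', sq_nonneg c]
    calc φ u * (∑ i, v i ^ 2) = φ u * c ^ 2 := by rw [hnormsq]
      _ ≤ φ w := this
      _ = v ⬝ᵥ A *ᵥ v := by
          simp only [hφ, dotProduct, mulVec]
          exact Finset.sum_congr rfl fun i _ => by simp [hwv]



lemma diag_quad {N : ℕ} (Vl : Finset (Fin N)) (c : ℝ) (v : Fin N → ℝ) :
    v ⬝ᵥ (c • Matrix.diagonal (fun i => if i ∈ Vl then (1 : ℝ) else 0)) *ᵥ v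
      = c * ∑ i ∈ Vl, v i ^ 2 := by
  have h : ∀ i : Fin N, v i * (c * ((if i ∈ Vl then (1 : ℝ) else 0) * v i))
      = if i ∈ Vl then c * v i ^ 2 else 0 := by
    intro i; split <;> ring
  simp only [dotProduct, smul_mulVec, Pi.smul_apply, mulVec_diagonal, smul_eq_mul, h]
  rw [Finset.sum_ite_mem, Finset.univ_inter, Finset.mul_sum]

lemma grounded_posdef {N : ℕ} (G : SimpleGraph (Fin N)) [DecidableRel G.Adj]
    (Vl : Finset (Fin N)) {c : ℝ} (hc : 0 < c)
    (hreach : ∀ v : Fin N, ∃ w ∈ Vl, G.Reachable v w)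
    (v : Fin N → ℝ) (hv : v ≠ 0) :
    0 < v ⬝ᵥ (G.lapMatrix ℝ + c • Matrix.diagonal (fun i => if i ∈ Vl then (1 : ℝ) else 0)) *ᵥ v := by
  rw [Matrix.add_mulVec, dotProduct_add, diag_quad]
  have hlap : 0 ≤ v ⬝ᵥ G.lapMatrix ℝ *ᵥ v := by
    rw [← Matrix.toLinearMap₂'_apply', SimpleGraph.lapMatrix_toLinearMap₂']
    positivity
  have hdiag : 0 ≤ c * ∑ i ∈ Vl, v i ^ 2 := by
    have : 0 ≤ ∑ i ∈ Vl, v i ^ 2 := Finset.sum_nonneg fun i _ => sq_nonneg _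
    positivity
  rcases lt_or_eq_of_le (le_add_of_le_of_nonneg hlap hdiag) with h | h
  · linarith [h]
  · exfalso
    -- both parts are zero
    have hlap0 : v ⬝ᵥ G.lapMatrix ℝ *ᵥ v = 0 := by linarith [
      (by nlinarith [hlap, hdiag, h.symm] : v ⬝ᵥ G.lapMatrix ℝ *ᵥ v ≤ 0)]
    have hdiag0 : ∑ i ∈ Vl, v i ^ 2 = 0 := by nlinarith [hlap, hdiag, h.symm]
    have hconst : ∀ i j : Fin N, G.Reachable i j → v i = v j := by
      rw [← SimpleGraph.lapMatrix_toLinearMap₂'_apply'_eq_zero_iff_forall_reachable]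
      rw [Matrix.toLinearMap₂'_apply']
      exact hlap0
    have hVl0 : ∀ i ∈ Vl, v i = 0 := by
      intro i hi
      have := (Finset.sum_eq_zero_iff_of_nonneg (fun i _ => sq_nonneg (v i))).mp hdiag0 i hi
      exact pow_eq_zero_iff (two_ne_zero) |>.mp this
    apply hv
    funext i
    obtain ⟨w, hw, hr⟩ := hreach i
    rw [Pi.zero_apply, hconst i w hr, hVl0 w hw]

lemma norm_sq_eucl {ι : Type*} [Fintype ι] (x : EuclideanSpace ℝ ι) :
    ‖x‖ ^ 2 = ∑ i, x i ^ 2 := by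
  rw [EuclideanSpace.norm_eq, Real.sq_sqrt (by positivity)]
  simp [sq_abs]

lemma quad_split {N d : ℕ} (A : Matrix (Fin N) (Fin N) ℝ) (Vl : Finset (Fin N)) (c : ℝ)
    (Δ : EuclideanSpace ℝ (Fin N × Fin d)) :
    (inner ℝ Δ (Lop A Δ) : ℝ) + c * ∑ i ∈ Vl, ‖proj2 i Δ‖ ^ 2
      = ∑ j : Fin d, (fun i => Δ (i, j)) ⬝ᵥ
          (A + c • Matrix.diagonal (fun i => if i ∈ Vl then (1 : ℝ) else 0)) *ᵥ
          (fun i => Δ (i, j)) := by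
  rw [inner_Lop]
  have : ∀ j : Fin d, (fun i => Δ (i, j)) ⬝ᵥ
      (A + c • Matrix.diagonal (fun i => if i ∈ Vl then (1 : ℝ) else 0)) *ᵥ (fun i => Δ (i, j))
      = (fun i => Δ (i, j)) ⬝ᵥ A *ᵥ (fun i => Δ (i, j)) + c * ∑ i ∈ Vl, Δ (i, j) ^ 2 := by
    intro j
    rw [Matrix.add_mulVec, dotProduct_add, diag_quad]
  simp only [this, Finset.sum_add_distrib]
  congr 1
  rw [← Finset.mul_sum, Finset.sum_comm]
  congr 1
  refine Finset.sum_congr rfl fun i _ => ?_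
  rw [norm_sq_eucl]
  exact Finset.sum_congr rfl fun j _ => by rw [proj2_apply]

lemma norm_sq_split {N d : ℕ} (Δ : EuclideanSpace ℝ (Fin N × Fin d)) :
    ‖Δ‖ ^ 2 = ∑ j : Fin d, ∑ i : Fin N, Δ (i, j) ^ 2 := by
  rw [norm_sq_eucl, Fintype.sum_prod_type, Finset.sum_comm]

lemma backward_dir {N d : ℕ} [NeZero N] [NeZero d]
    (G : SimpleGraph (Fin N)) [DecidableRel G.Adj]
    (Vl : Finset (Fin N)) (r : EuclideanSpace ℝ (Fin N × Fin d))
    (mψ Lψ : ℝ) (hmψ : 0 < mψ) (hmLψ : mψ ≤ Lψ)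
    (hreach : ∀ v : Fin N, ∃ w ∈ Vl, G.Reachable v w) :
    ∃ m L : ℝ, 0 < m ∧ m ≤ L ∧
      ∀ ψ : EuclideanSpace ℝ (Fin d) → ℝ, memS mψ Lψ ψ →
        memS m L (bigf (G.lapMatrix ℝ) r Vl ψ) := by
  obtain ⟨m, hm, hmq⟩ := exists_spectral_min
    (G.lapMatrix ℝ + mψ • Matrix.diagonal (fun i => if i ∈ Vl then (1 : ℝ) else 0))
    (grounded_posdef G Vl hmψ hreach)
  set L0 : ℝ := ‖Lop (d := d) (G.lapMatrix ℝ)‖ + Lψ with hL0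
  refine ⟨m, max L0 m, hm, le_max_right _ _, fun ψ hψ => ?_⟩
  obtain ⟨hψc, hψb⟩ := hψ
  refine ⟨bigf_contDiff _ _ _ hψc, fun y₁ y₂ => ?_⟩
  have hgi := bigf_grad_inner (G.lapMatrix ℝ) r Vl hψc y₁ y₂
  rw [hgi]
  set Δ := y₁ - y₂ with hΔ
  have hproj : ∀ i : Fin N, proj2 i y₁ - proj2 i y₂ = proj2 i Δ :=
    fun i => (map_sub (proj2 i) y₁ y₂).symm
  have hsum_nonneg : (0 : ℝ) ≤ ∑ i ∈ Vl, ‖proj2 i Δ‖ ^ 2 :=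
    Finset.sum_nonneg fun i _ => sq_nonneg _
  constructor
  · -- lower bound
    have h1 : m * ‖Δ‖ ^ 2 ≤ (inner ℝ Δ (Lop (G.lapMatrix ℝ) Δ) : ℝ)
        + mψ * ∑ i ∈ Vl, ‖proj2 i Δ‖ ^ 2 := by
      rw [quad_split, norm_sq_split, Finset.mul_sum]
      exact Finset.sum_le_sum fun j _ => hmq _
    have h2 : mψ * ∑ i ∈ Vl, ‖proj2 i Δ‖ ^ 2
        ≤ ∑ i ∈ Vl, (inner ℝ (gradient ψ (proj2 i y₁) - gradient ψ (proj2 i y₂))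
            (proj2 i y₁ - proj2 i y₂) : ℝ) := by
      rw [Finset.mul_sum]
      refine Finset.sum_le_sum fun i _ => ?_
      have := (hψb (proj2 i y₁) (proj2 i y₂)).1
      rwa [hproj i] at this ⊢
    linarith
  · -- upper bound
    have hA : (inner ℝ Δ (Lop (G.lapMatrix ℝ) Δ) : ℝ)
        ≤ ‖Lop (d := d) (G.lapMatrix ℝ)‖ * ‖Δ‖ ^ 2 := by
      calc (inner ℝ Δ (Lop (G.lapMatrix ℝ) Δ) : ℝ) ≤ ‖Δ‖ * ‖Lop (G.lapMatrix ℝ) Δ‖ :=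
            real_inner_le_norm _ _
        _ ≤ ‖Δ‖ * (‖Lop (d := d) (G.lapMatrix ℝ)‖ * ‖Δ‖) :=
            mul_le_mul_of_nonneg_left ((Lop (G.lapMatrix ℝ)).le_opNorm Δ) (norm_nonneg _)
        _ = ‖Lop (d := d) (G.lapMatrix ℝ)‖ * ‖Δ‖ ^ 2 := by ring
    have hψup : ∑ i ∈ Vl, (inner ℝ (gradient ψ (proj2 i y₁) - gradient ψ (proj2 i y₂))
          (proj2 i y₁ - proj2 i y₂) : ℝ) ≤ Lψ * ∑ i ∈ Vl, ‖proj2 i Δ‖ ^ 2 := by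
      rw [Finset.mul_sum]
      refine Finset.sum_le_sum fun i _ => ?_
      have := (hψb (proj2 i y₁) (proj2 i y₂)).2
      rwa [hproj i] at this ⊢
    have hsub : ∑ i ∈ Vl, ‖proj2 i Δ‖ ^ 2 ≤ ‖Δ‖ ^ 2 := by
      have heq : ∀ i : Fin N, ‖proj2 i Δ‖ ^ 2 = ∑ j, Δ (i, j) ^ 2 := by
        intro i
        rw [norm_sq_eucl]
        exact Finset.sum_congr rfl fun j _ => by rw [proj2_apply]
      simp only [heq]
      calc ∑ i ∈ Vl, ∑ j, Δ (i, j) ^ 2 ≤ ∑ i : Fin N, ∑ j, Δ (i, j) ^ 2 := by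
            refine Finset.sum_le_sum_of_subset_of_nonneg (Finset.subset_univ Vl) ?_
            intro i _ _
            exact Finset.sum_nonneg fun j _ => sq_nonneg _
        _ = ‖Δ‖ ^ 2 := by rw [norm_sq_split]; exact Finset.sum_comm
    have hLψ : 0 ≤ Lψ := le_of_lt (lt_of_lt_of_le hmψ hmLψ)
    have : (inner ℝ Δ (Lop (G.lapMatrix ℝ) Δ) : ℝ) + ∑ i ∈ Vl, (inner ℝ
        (gradient ψ (proj2 i y₁) - gradient ψ (proj2 i y₂))
        (proj2 i y₁ - proj2 i y₂) : ℝ) ≤ L0 * ‖Δ‖ ^ 2 := by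
      rw [hL0, add_mul]
      have : Lψ * ∑ i ∈ Vl, ‖proj2 i Δ‖ ^ 2 ≤ Lψ * ‖Δ‖ ^ 2 :=
        mul_le_mul_of_nonneg_left hsub hLψ
      linarith
    calc _ ≤ L0 * ‖Δ‖ ^ 2 := this
      _ ≤ max L0 m * ‖Δ‖ ^ 2 :=
          mul_le_mul_of_nonneg_right (le_max_left _ _) (sq_nonneg _)

lemma grad_psi0 {F : Type*} [NormedAddCommGroup F] [InnerProductSpace ℝ F] [CompleteSpace F]
    (c : ℝ) (x : F) : HasGradientAt (fun z : F => c / 2 * ‖z‖ ^ 2) (c • x) x := by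
  rw [hasGradientAt_iff_hasFDerivAt]
  have hx : HasFDerivAt (fun z : F => (inner ℝ z z : ℝ))
      ((fderivInnerCLM ℝ ((x : F), x)).comp
        ((ContinuousLinearMap.id ℝ F).prod (ContinuousLinearMap.id ℝ F))) x :=
    (hasFDerivAt_id x).inner ℝ (hasFDerivAt_id x)
  have h2 := hx.const_mul (c / 2)
  have hfun : (fun z : F => c / 2 * (inner ℝ z z : ℝ)) = fun z : F => c / 2 * ‖z‖ ^ 2 := by
    funext z; rw [real_inner_self_eq_norm_sq]
  rw [hfun] at h2
  refine h2.congr_fderiv ?_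
  ext v
  simp only [ContinuousLinearMap.coe_comp', Function.comp_apply,
    ContinuousLinearMap.smul_apply, ContinuousLinearMap.prod_apply,
    ContinuousLinearMap.coe_id', id_eq, fderivInnerCLM_apply, smul_eq_mul,
    InnerProductSpace.toDual_apply_apply, real_inner_smul_left]
  rw [real_inner_comm v x]
  ring

lemma psi0_memS {F : Type*} [NormedAddCommGroup F] [InnerProductSpace ℝ F] [CompleteSpace F]
    (mψ Lψ : ℝ) (hmψ : 0 < mψ) (hmLψ : mψ ≤ Lψ) :
    memS mψ Lψ (fun z : F => mψ / 2 * ‖z‖ ^ 2) := by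
  have hgrad : ∀ x : F, gradient (fun z : F => mψ / 2 * ‖z‖ ^ 2) x = mψ • x :=
    fun x => (grad_psi0 mψ x).gradient
  refine ⟨contDiff_const.mul (contDiff_norm_sq ℝ), fun y₁ y₂ => ?_⟩
  rw [hgrad, hgrad, ← smul_sub, real_inner_smul_left, real_inner_self_eq_norm_sq]
  constructor
  · exact le_refl _
  · exact mul_le_mul_of_nonneg_right hmLψ (sq_nonneg _)

lemma forward_dir {N d : ℕ} [NeZero N] [NeZero d]
    (G : SimpleGraph (Fin N)) [DecidableRel G.Adj]
    (Vl : Finset (Fin N)) (r : EuclideanSpace ℝ (Fin N × Fin d))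
    (mψ Lψ : ℝ) (hmψ : 0 < mψ) (hmLψ : mψ ≤ Lψ)
    (h : ∃ m L : ℝ, 0 < m ∧ m ≤ L ∧
      ∀ ψ : EuclideanSpace ℝ (Fin d) → ℝ, memS mψ Lψ ψ →
        memS m L (bigf (G.lapMatrix ℝ) r Vl ψ)) :
    ∀ v : Fin N, ∃ w ∈ Vl, G.Reachable v w := by
  intro v
  by_contra hno
  push_neg at hno
  obtain ⟨m, L, hm, _, hall⟩ := h
  have hψc : ContDiff ℝ 1 (fun z : EuclideanSpace ℝ (Fin d) => mψ / 2 * ‖z‖ ^ 2) :=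
    contDiff_const.mul (contDiff_norm_sq ℝ)
  have hmem := hall _ (psi0_memS mψ Lψ hmψ hmLψ)
  set z : EuclideanSpace ℝ (Fin N × Fin d) :=
    (WithLp.equiv 2 _).symm (fun p : Fin N × Fin d =>
      if G.Reachable p.1 v then (1 : ℝ) else 0) with hz
  have hzap : ∀ p : Fin N × Fin d, z p = if G.Reachable p.1 v then (1 : ℝ) else 0 :=
    fun p => rfl
  have hgrad : ∀ x : EuclideanSpace ℝ (Fin d),
      gradient (fun z : EuclideanSpace ℝ (Fin d) => mψ / 2 * ‖z‖ ^ 2) x = mψ • x :=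
    fun x => (grad_psi0 mψ x).gradient
  have hlow := (hmem.2 (r + z) r).1
  rw [bigf_grad_inner (G.lapMatrix ℝ) r Vl hψc (r + z) r] at hlow
  have hΔ : (r + z) - r = z := add_sub_cancel_left r z
  rw [hΔ] at hlow
  have hp : ∀ i : Fin N, proj2 (d := d) i (r + z) - proj2 i r = proj2 i z := by
    intro i; rw [map_add]; exact add_sub_cancel_left _ _
  have hpz : ∀ i ∈ Vl, proj2 (d := d) i z = 0 := by
    intro i hi
    ext j
    rw [proj2_apply, hzap]
    simp only
    rw [if_neg]
    · rfl
    · intro hr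
      exact hno i hi hr.symm
  have hsum0 : ∑ i ∈ Vl, (inner ℝ (gradient (fun z : EuclideanSpace ℝ (Fin d) => mψ / 2 * ‖z‖ ^ 2)
        (proj2 i (r + z)) - gradient (fun z : EuclideanSpace ℝ (Fin d) => mψ / 2 * ‖z‖ ^ 2)
        (proj2 i r)) (proj2 i (r + z) - proj2 i r) : ℝ) = 0 := by
    refine Finset.sum_eq_zero fun i hi => ?_
    rw [hgrad, hgrad, ← smul_sub, hp i, hpz i hi]
    simp
  have hquad0 : (inner ℝ z (Lop (G.lapMatrix ℝ) z) : ℝ) = 0 := by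
    rw [inner_Lop]
    refine Finset.sum_eq_zero fun j _ => ?_
    have hcol : (fun i => z (i, j)) = fun i => if G.Reachable i v then (1 : ℝ) else 0 := by
      funext i; exact hzap (i, j)
    rw [hcol, ← Matrix.toLinearMap₂'_apply']
    rw [SimpleGraph.lapMatrix_toLinearMap₂'_apply'_eq_zero_iff_forall_adj]
    intro a b hadj
    by_cases hra : G.Reachable a v
    · rw [if_pos hra, if_pos (hadj.symm.reachable.trans hra)]
    · rw [if_neg hra, if_neg fun hrb => hra (hadj.reachable.trans hrb)]
  rw [hsum0, hquad0, add_zero] at hlow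
  have hzne : z ≠ 0 := by
    intro h0
    obtain ⟨j₀⟩ := (inferInstance : Nonempty (Fin d))
    have h1 : z (v, j₀) = 1 := by
      rw [hzap]; exact if_pos (SimpleGraph.Reachable.refl v)
    rw [h0] at h1
    exact one_ne_zero h1.symm
  have : 0 < m * ‖z‖ ^ 2 := mul_pos hm (pow_pos (norm_pos_iff.mpr hzne) 2)
  linarith


/-- there exist `0 < m ≤ L` with `f ∈ S(m,L)` for every `ψ ∈ S(m_ψ,L_ψ)`
iff every vertex of the graph has a path to some informed agent. -/
theorem stmt4 {N d : ℕ} [NeZero N] [NeZero d]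
    (G : SimpleGraph (Fin N)) [DecidableRel G.Adj]
    (Vl : Finset (Fin N)) (hVl : Vl.Nonempty)
    (r : EuclideanSpace ℝ (Fin N × Fin d)) (mψ Lψ : ℝ) (hmψ : 0 < mψ) (hmLψ : mψ ≤ Lψ) :
    (∃ m L : ℝ, 0 < m ∧ m ≤ L ∧
        ∀ ψ : EuclideanSpace ℝ (Fin d) → ℝ, memS mψ Lψ ψ →
          memS m L (bigf (G.lapMatrix ℝ) r Vl ψ)) ↔
      ∀ v : Fin N, ∃ w ∈ Vl, G.Reachable v w := by
  constructor
  · exact forward_dir G Vl r mψ Lψ hmψ hmLψ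
  · exact backward_dir G Vl r mψ Lψ hmψ hmLψ
end

section
/- Let ψ ∈ S(m_ψ, L_ψ) with minimizer y_opt (so ∇ψ(y_opt) = 0), let 𝓖 and 𝓥_l satisfy the connectivity assumption, and set r = 0 in the definition f(y) = ½ yᵀ(𝓛⊗I_d)y + Σ_{i∈𝓥_l} ψ(y_i). Then z ∈ ℝ^{Nd} minimizes f if and only if z = 1_N ⊗ y_opt, i.e., every block z_i equals y_opt. -/
open Matrix
open scoped Kronecker

lemma memS_lt {E : Type*} [NormedAddCommGroup E] [InnerProductSpace ℝ E] [CompleteSpace E]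
    {m L : ℝ} {ψ : E → ℝ} (hm : 0 < m) (hψ : memS m L ψ)
    {yopt : E} (hyopt : gradient ψ yopt = 0) {x : E} (hx : x ≠ yopt) :
    ψ yopt < ψ x := by
  set v : E := x - yopt with hv
  have hvne : v ≠ 0 := sub_ne_zero.mpr hx
  have hdiff : Differentiable ℝ ψ := hψ.1.differentiable one_ne_zero
  set c : ℝ → E := fun t => yopt + t • v with hc
  have hcder : ∀ t : ℝ, HasDerivAt c v t := by
    intro t
    simpa only [id, one_smul] using ((hasDerivAt_id t).smul_const v).const_add yopt
  have hgder : ∀ t : ℝ, HasDerivAt (fun s => ψ (c s))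
      ((inner ℝ (gradient ψ (c t)) v : ℝ)) t := by
    intro t
    have h1 : HasGradientAt ψ (gradient ψ (c t)) (c t) :=
      (hdiff (c t)).hasGradientAt
    have h2 := h1.hasFDerivAt.comp_hasDerivAt t (hcder t)
    have h3 : HasDerivAt (fun s => ψ (c s)) (((InnerProductSpace.toDual ℝ E) (gradient ψ (c t))) v) t := h2
    simpa [InnerProductSpace.toDual_apply_apply] using h3
  have hcont : ContinuousOn (fun s => ψ (c s)) (Set.Icc 0 1) :=
    (hdiff.continuous.comp (continuous_const.add (continuous_id.smul continuous_const))).continuousOn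
  obtain ⟨t, ht, hslope⟩ := exists_hasDerivAt_eq_slope (fun s => ψ (c s))
    (fun t => (inner ℝ (gradient ψ (c t)) v : ℝ)) one_pos hcont (fun t _ => hgder t)
  have hc0 : c 0 = yopt := by simp [hc]
  have hc1 : c 1 = x := by simp [hc, hv]
  have key : m * ‖t • v‖ ^ 2 ≤ (inner ℝ (gradient ψ (c t) - gradient ψ yopt) (c t - yopt) : ℝ) := by
    have := (hψ.2 (c t) yopt).1
    simpa [hc] using this
  have hct : c t - yopt = t • v := by simp [hc]
  rw [hyopt, sub_zero, hct] at key
  have hinner : (inner ℝ (gradient ψ (c t)) (t • v) : ℝ) = t * (inner ℝ (gradient ψ (c t)) v : ℝ) :=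
    real_inner_smul_right _ _ _
  rw [hinner] at key
  have hnorm : ‖t • v‖ ^ 2 = t ^ 2 * ‖v‖ ^ 2 := by
    rw [norm_smul]; ring_nf; simp [abs_sq, mul_pow]; ring
  have htpos : 0 < t := ht.1
  have hvpos : 0 < ‖v‖ ^ 2 := pow_pos (norm_pos_iff.mpr hvne) 2
  have : 0 < t * (inner ℝ (gradient ψ (c t)) v : ℝ) := by
    calc (0:ℝ) < m * (t ^ 2 * ‖v‖ ^ 2) := mul_pos hm (mul_pos (pow_pos htpos 2) hvpos)
    _ ≤ _ := by rw [← hnorm]; exact key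
  have hpos : 0 < (inner ℝ (gradient ψ (c t)) v : ℝ) := by
    by_contra h
    push_neg at h
    nlinarith
  have : (inner ℝ (gradient ψ (c t)) v : ℝ) = ψ x - ψ yopt := by
    rw [hslope, hc0, hc1]; ring
  linarith [this ▸ hpos]

lemma kron_quad {N d : ℕ} (L : Matrix (Fin N) (Fin N) ℝ)
    (y : Fin N × Fin d → ℝ) :
    y ⬝ᵥ (L ⊗ₖ (1 : Matrix (Fin d) (Fin d) ℝ)).mulVec y =
      ∑ j : Fin d, (fun i => y (i, j)) ⬝ᵥ L.mulVec (fun i => y (i, j)) := by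
  simp only [dotProduct, mulVec, kroneckerMap_apply, Matrix.one_apply,
    Fintype.sum_prod_type, mul_ite, mul_one, mul_zero, ite_mul, zero_mul,
    Finset.sum_ite_eq, Finset.mem_univ, if_true]
  rw [Finset.sum_comm]

/-- with formation reference `r = 0`, `z` minimizes `f` iff every block of
`z` equals the source `y_opt`, i.e. `z = 1_N ⊗ y_opt`. -/
theorem stmt6 {N d : ℕ} [NeZero N] [NeZero d]
    (G : SimpleGraph (Fin N)) [DecidableRel G.Adj]
    (Vl : Finset (Fin N)) (hVl : Vl.Nonempty)
    (hconn : ∀ v : Fin N, ∃ w ∈ Vl, G.Reachable v w)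
    (mψ Lψ : ℝ) (hmψ : 0 < mψ) (hmLψ : mψ ≤ Lψ)
    (ψ : EuclideanSpace ℝ (Fin d) → ℝ) (hψ : memS mψ Lψ ψ)
    (yopt : EuclideanSpace ℝ (Fin d)) (hyopt : gradient ψ yopt = 0)
    (z : EuclideanSpace ℝ (Fin N × Fin d)) :
    (∀ y, bigf (G.lapMatrix ℝ) 0 Vl ψ z ≤ bigf (G.lapMatrix ℝ) 0 Vl ψ y) ↔
      ∀ (i : Fin N) (j : Fin d), z (i, j) = yopt j := by
  set L := G.lapMatrix ℝ with hL
  -- quadratic form per coordinate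
  set S : EuclideanSpace ℝ (Fin N × Fin d) → ℝ :=
    fun y => ∑ j : Fin d, (fun i => y (i, j)) ⬝ᵥ L.mulVec (fun i => y (i, j)) with hS
  have hbigf : ∀ y, bigf L 0 Vl ψ y = (1/2) * S y + ∑ i ∈ Vl, ψ (WithLp.toLp 2 (fun j => y (i, j))) := by
    intro y
    have h0 : (fun p => y p - (0 : EuclideanSpace ℝ (Fin N × Fin d)) p) = fun p => y p := by
      funext p; simp
    rw [bigf, h0, kron_quad]
  have hψge : ∀ x, ψ yopt ≤ ψ x := by
    intro x
    by_cases hx : x = yopt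
    · exact le_of_eq (by rw [hx])
    · exact (memS_lt hmψ hψ hyopt hx).le
  have hQnonneg : ∀ x : Fin N → ℝ, 0 ≤ x ⬝ᵥ L.mulVec x := by
    intro x
    simpa using (SimpleGraph.posSemidef_lapMatrix ℝ G).dotProduct_mulVec_nonneg x
  set zstar : EuclideanSpace ℝ (Fin N × Fin d) := WithLp.toLp 2 (fun p : Fin N × Fin d => yopt p.2) with hzstar
  have hSzstar : S zstar = 0 := by
    apply Finset.sum_eq_zero
    intro j _
    have hc : (fun i : Fin N => zstar (i, j)) = (yopt j) • (fun _ : Fin N => (1:ℝ)) := by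
      funext i; simp [hzstar]
    rw [hc, Matrix.mulVec_smul, hL, SimpleGraph.lapMatrix_mulVec_const_eq_zero]
    simp
  have hfzstar : bigf L 0 Vl ψ zstar = ∑ i ∈ Vl, ψ yopt := by
    rw [hbigf, hSzstar]
    simp [hzstar]
  constructor
  · intro hmin i j
    have h1 := hmin zstar
    rw [hbigf, hfzstar] at h1
    have hSz : 0 ≤ S z := Finset.sum_nonneg fun j _ => hQnonneg _
    have hPz : ∑ i ∈ Vl, ψ yopt ≤ ∑ i ∈ Vl, ψ (WithLp.toLp 2 (fun j => z (i, j))) :=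
      Finset.sum_le_sum fun i _ => hψge _
    have hSz0 : S z = 0 := le_antisymm (by linarith) hSz
    have hPle : ∑ i ∈ Vl, ψ (WithLp.toLp 2 (fun j => z (i, j))) ≤ ∑ i ∈ Vl, ψ yopt := by
      rw [hSz0] at h1; linarith
    -- blocks on Vl equal yopt
    have hblock : ∀ i ∈ Vl, WithLp.toLp 2 (fun j => z (i, j)) = yopt := by
      intro i hi
      by_contra hne
      have : ∑ i ∈ Vl, ψ yopt < ∑ i ∈ Vl, ψ (WithLp.toLp 2 (fun j => z (i, j))) :=
        Finset.sum_lt_sum (fun k _ => hψge _) ⟨i, hi, memS_lt hmψ hψ hyopt hne⟩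
      linarith
    -- each coordinate column is constant on connected components
    have hcol : ∀ j : Fin d, ∀ a b : Fin N, G.Reachable a b → z (a, j) = z (b, j) := by
      intro j
      have hterm : (fun i : Fin N => z (i, j)) ⬝ᵥ L.mulVec (fun i => z (i, j)) = 0 := by
        have := (Finset.sum_eq_zero_iff_of_nonneg (fun j _ => hQnonneg
          (fun i : Fin N => z (i, j)))).mp hSz0
        exact this j (Finset.mem_univ j)
      have := (G.lapMatrix_toLinearMap₂'_apply'_eq_zero_iff_forall_reachable
        (fun i : Fin N => z (i, j))).mp (by rw [Matrix.toLinearMap₂'_apply']; exact hterm)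
      exact this
    obtain ⟨w, hw, hreach⟩ := hconn i
    have h2 : z (w, j) = yopt j := congrArg (fun v : EuclideanSpace ℝ (Fin d) => v j) (hblock w hw)
    rw [← h2]
    exact hcol j i w hreach
  · intro hz y
    have hzeq : z = zstar := by
      ext p
      exact hz p.1 p.2
    rw [hzeq, hfzstar, hbigf]
    have h1 : 0 ≤ (1/2) * S y :=
      mul_nonneg (by norm_num) (Finset.sum_nonneg fun j _ => hQnonneg _)
    have h2 : ∑ i ∈ Vl, ψ yopt ≤ ∑ i ∈ Vl, ψ (WithLp.toLp 2 (fun j => y (i, j))) :=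
      Finset.sum_le_sum fun i _ => hψge _
    linarith
end
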